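/- Suppose A is a finite K-approximate group in a group G and A₁, A₂ ⊆ A satisfy |A₁| = δ₁|A| and |A₂| = δ₂|A|. Then A₁·A₁⁻¹ ∩ A₂·A₂⁻¹ contains a set of the form B·B⁻¹ where B ⊆ A and |B| ≥ δ₁δ₂|A|/K. -/

import Mathlib

open Pointwise

theorem common_symmetric_subset {G : Type*} [Group G] [DecidableEq G]
    (K δ₁ δ₂ : ℝ) (hK : 1 ≤ K)
    (A A₁ A₂ : Finset G) (h1 : (1 : G) ∈ A) (hsym : A⁻¹ = A)
    (hcov : ∃ X : Finset G, (X.card : ℝ) ≤ K ∧ A * A ⊆ X * A)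
    (hA₁ : A₁ ⊆ A) (hA₂ : A₂ ⊆ A)
    (hd₁ : (A₁.card : ℝ) = δ₁ * A.card) (hd₂ : (A₂.card : ℝ) = δ₂ * A.card) :
    ∃ B : Finset G, B ⊆ A ∧ δ₁ * δ₂ * A.card / K ≤ (B.card : ℝ) ∧
      B * B⁻¹ ⊆ A₁ * A₁⁻¹ ∩ (A₂ * A₂⁻¹) := by
  obtain ⟨X, hX, hXA⟩ := hcov
  have hKpos : (0 : ℝ) < K := lt_of_lt_of_le one_pos hK
  -- trivial cases
  by_cases hA0 : (A.card : ℝ) = 0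
  · refine ⟨∅, by simp, ?_, by simp⟩
    simp [hA0]
  have hApos : (0 : ℝ) < A.card := lt_of_le_of_ne (by positivity) (Ne.symm hA0)
  rcases A₁.eq_empty_or_nonempty with h₁ | h₁
  · refine ⟨∅, by simp, ?_, by simp⟩
    have : δ₁ = 0 := by
      have := hd₁; rw [h₁] at this; simp at this
      rcases this with h | h
      · exact h
      · exact absurd (by rw [h]; simp) hA0
    simp [this]
  rcases A₂.eq_empty_or_nonempty with h₂ | h₂
  · refine ⟨∅, by simp, ?_, by simp⟩
    have : δ₂ = 0 := by
      have := hd₂; rw [h₂] at this; simp at this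
      rcases this with h | h
      · exact h
      · exact absurd (by rw [h]; simp) hA0
    simp [this]
  -- main case
  set P := A₁ ×ˢ A₂ with hP
  set f : G × G → G := fun p => p.1⁻¹ * p.2 with hf
  set s := P.image f with hs
  have hPne : P.Nonempty := h₁.product h₂
  have hsne : s.Nonempty := hPne.image f
  have hsub : s ⊆ X * A := by
    intro y hy
    obtain ⟨p, hp, rfl⟩ := Finset.mem_image.mp hy
    obtain ⟨hp1, hp2⟩ := Finset.mem_product.mp hp
    apply hXA
    have h1' : p.1⁻¹ ∈ A := by
      rw [← hsym]; exact Finset.inv_mem_inv (hA₁ hp1)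
    exact Finset.mul_mem_mul h1' (hA₂ hp2)
  obtain ⟨x, hxs, hxmax⟩ := s.exists_max_image
    (fun y => ((P.filter fun p => f p = y).card : ℝ)) hsne
  set B := A₂.filter (fun a => a * x⁻¹ ∈ A₁) with hB
  have hBsub : B ⊆ A := fun a ha => hA₂ (Finset.mem_filter.mp ha).1
  -- fiber card equals B card
  have hcard : (P.filter fun p => f p = x).card = B.card := by
    apply Finset.card_bij (fun p _ => p.2)
    · intro p hp
      rw [Finset.mem_filter] at hp ⊢
      obtain ⟨hpP, hpx⟩ := hp
      obtain ⟨hp1, hp2⟩ := Finset.mem_product.mp hpP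
      refine ⟨hp2, ?_⟩
      have : p.2 * x⁻¹ = p.1 := by
        rw [← hpx]; simp [hf, mul_assoc]
      rw [this]; exact hp1
    · intro p hp q hq hpq
      rw [Finset.mem_filter] at hp hq
      have h1 : p.1 = p.2 * x⁻¹ := by
        have := hp.2; simp only [hf] at this
        rw [← this]; group
      have h2 : q.1 = q.2 * x⁻¹ := by
        have := hq.2; simp only [hf] at this
        rw [← this]; group
      exact Prod.ext (by rw [h1, h2, hpq]) hpq
    · intro b hb
      rw [Finset.mem_filter] at hb
      refine ⟨(b * x⁻¹, b), ?_, rfl⟩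
      rw [Finset.mem_filter, Finset.mem_product]
      refine ⟨⟨hb.2, hb.1⟩, ?_⟩
      simp [hf]
  -- counting
  have hsum : P.card = ∑ y ∈ s, (P.filter fun p => f p = y).card :=
    Finset.card_eq_sum_card_fiberwise (fun p hp => Finset.mem_image_of_mem f hp)
  have hcount : (P.card : ℝ) ≤ s.card * B.card := by
    rw [hsum]
    push_cast
    calc (∑ y ∈ s, ((P.filter fun p => f p = y).card : ℝ))
        ≤ ∑ y ∈ s, ((P.filter fun p => f p = x).card : ℝ) :=
          Finset.sum_le_sum (fun y hy => hxmax y hy)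
      _ = s.card * B.card := by rw [Finset.sum_const, hcard]; push_cast; ring
  have hscard : (s.card : ℝ) ≤ K * A.card := by
    calc (s.card : ℝ) ≤ ((X * A).card : ℝ) := by exact_mod_cast Finset.card_le_card hsub
      _ ≤ (X.card : ℝ) * A.card := by exact_mod_cast Finset.card_mul_le
      _ ≤ K * A.card := by
          apply mul_le_mul_of_nonneg_right hX (by positivity)
  have hPcard : (P.card : ℝ) = (A₁.card : ℝ) * A₂.card := by
    rw [hP, Finset.card_product]; push_cast; ring
  refine ⟨B, hBsub, ?_, ?_⟩
  · rw [div_le_iff₀ hKpos]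
    have key : (A₁.card : ℝ) * A₂.card ≤ K * A.card * B.card := by
      calc (A₁.card : ℝ) * A₂.card = P.card := hPcard.symm
        _ ≤ s.card * B.card := hcount
        _ ≤ K * A.card * B.card :=
            mul_le_mul_of_nonneg_right hscard (by positivity)
    nlinarith [key, hApos, hd₁, hd₂]
  · intro g hg
    obtain ⟨b₁, hb₁, c, hc, rfl⟩ := Finset.mem_mul.mp hg
    obtain ⟨b₂, hb₂, rfl⟩ := Finset.mem_inv.mp hc
    rw [Finset.mem_filter] at *
    rw [Finset.mem_inter]
    constructor
    · have e : b₁ * b₂⁻¹ = (b₁ * x⁻¹) * (b₂ * x⁻¹)⁻¹ := by group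
      rw [e]
      exact Finset.mul_mem_mul hb₁.2 (Finset.inv_mem_inv hb₂.2)
    · exact Finset.mul_mem_mul hb₁.1 (Finset.inv_mem_inv hb₂.1)
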